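/- Suppose the map Γ ↦ (s − Γ) f_Γ′(Γ)/f_Γ(Γ) is nondecreasing on [0, s) and α ∈ ( −s f_Γ′(0)/((1 − s f_Γ′(0)) θ_min), 1/θ_min ). Then along any solution Γ : [τ, T] → [0, s) of the liquidation ODE with Γ(τ) = 0, the quantity Λ(t) := 1 + ((1 − α θ_min)/(α θ_min)) (s − Γ(t)) f_Γ′(Γ(t))/f_Γ(Γ(t)) is nondecreasing in t; in particular Λ(t) ≥ Λ(τ) = 1 + ((1 − α θ_min)/(α θ_min)) s f_Γ′(0) > 0 for all t ∈ [τ, T]. -/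

import Mathlib

open Set Filter Topology

noncomputable section

/-- Auxiliary: if `f` has derivative `d` at `x` and `f y ≤ f x` for all `y > x`
near `x`, then `d ≤ 0`. -/
lemma aux_deriv_nonpos {f : ℝ → ℝ} {d x : ℝ} (hf : HasDerivAt f d x)
    (h : ∀ᶠ y in 𝓝[>] x, f y ≤ f x) : d ≤ 0 := by
  have hslope := hasDerivAt_iff_tendsto_slope.mp hf
  have h2 : Tendsto (slope f x) (𝓝[>] x) (𝓝 d) :=
    hslope.mono_left (nhdsWithin_mono _ (fun y hy => ne_of_gt hy))
  refine le_of_tendsto h2 ?_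
  filter_upwards [self_mem_nhdsWithin, h] with y hy hfy
  rw [slope_def_field]
  apply div_nonpos_of_nonpos_of_nonneg <;> simp only [mem_Ioi] at hy <;> linarith

theorem Lambda_monotone_along_solution
    (s α θmin τ T : ℝ)
    (hs : 0 < s)
    (hθmin : 0 < θmin) (hα : 0 < α) (hαθ : α * θmin < 1)
    (hτ : 0 ≤ τ) (hτT : τ ≤ T)
    (ft fΓ : ℝ → ℝ)
    (hftC : ContDiff ℝ 1 ft) (hftanti : AntitoneOn ft (Ici 0))
    (hftmem : ∀ t ∈ Ici (0 : ℝ), ft t ∈ Ioc (0 : ℝ) 1) (hft0 : ft 0 = 1)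
    (hfΓC : ContDiff ℝ 2 fΓ) (hfΓanti : Antitone fΓ)
    (hfΓpos : ∀ γ, 0 < fΓ γ) (hfΓ0 : fΓ 0 = 1)
    -- key assumption on the inverse demand function
    (hmono : MonotoneOn (fun γ => (s - γ) * deriv fΓ γ / fΓ γ) (Ico 0 s))
    -- key assumption on the risk-weight
    (hαmem : α ∈ Ioo (-(s * deriv fΓ 0) / ((1 - s * deriv fΓ 0) * θmin)) (1 / θmin))
    -- the map `Z` (the bank is at the regulatory threshold on `[τ, T]`)
    (Z : ℝ → ℝ → ℝ)
    (hZ : ∀ t γ, Z t γ = ((1 - α * θmin) * (s - γ)) / (α * θmin * ft t * fΓ γ))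
    -- a solution `Γ : [τ,T] → [0,s)` of the liquidation ODE with `Γ(τ) = 0`
    (Γ Γ' : ℝ → ℝ)
    (hΓτ : Γ τ = 0)
    (hrange : ∀ t ∈ Icc τ T, Γ t ∈ Ico 0 s)
    (hderiv : ∀ t ∈ Icc τ T, HasDerivAt Γ (Γ' t) t)
    (hODE : ∀ t ∈ Icc τ T, Γ' t =
      -(Z t (Γ t) * deriv ft t * fΓ (Γ t)) /
        (1 + Z t (Γ t) * ft t * deriv fΓ (Γ t)))
    -- the quantity `Λ`
    (Λ : ℝ → ℝ)
    (hΛ : ∀ t, Λ t = 1 + (1 - α * θmin) / (α * θmin) *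
      ((s - Γ t) * deriv fΓ (Γ t) / fΓ (Γ t))) :
    MonotoneOn Λ (Icc τ T) ∧
    Λ τ = 1 + (1 - α * θmin) / (α * θmin) * (s * deriv fΓ 0) ∧
    0 < Λ τ ∧
    ∀ t ∈ Icc τ T, Λ τ ≤ Λ t := by
  have hαθ0 : 0 < α * θmin := mul_pos hα hθmin
  -- the derivative of `fΓ` is nonpositive
  have hdΓ : ∀ γ, deriv fΓ γ ≤ 0 := by
    intro γ
    refine aux_deriv_nonpos ((hfΓC.differentiable (by norm_num) γ).hasDerivAt) ?_
    filter_upwards [self_mem_nhdsWithin] with y hy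
    exact hfΓanti (le_of_lt hy)
  -- the derivative of `ft` is nonpositive on `[0, ∞)`
  have hdt : ∀ t : ℝ, 0 ≤ t → deriv ft t ≤ 0 := by
    intro t ht
    refine aux_deriv_nonpos ((hftC.differentiable (by norm_num) t).hasDerivAt) ?_
    filter_upwards [self_mem_nhdsWithin] with y hy
    exact hftanti ht (le_trans ht (le_of_lt hy)) (le_of_lt hy)
  have hftpos : ∀ t ∈ Icc τ T, 0 < ft t := fun t ht =>
    (hftmem t (le_trans hτ ht.1)).1
  have hZnn : ∀ t ∈ Icc τ T, 0 ≤ Z t (Γ t) := by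
    intro t ht
    rw [hZ]
    apply div_nonneg
    · exact mul_nonneg (by linarith) (by linarith [(hrange t ht).2])
    · have h1 := hftpos t ht
      have h2 := hfΓpos (Γ t)
      positivity
  -- the denominator in the ODE is exactly `Λ`
  have hden : ∀ t ∈ Icc τ T, 1 + Z t (Γ t) * ft t * deriv fΓ (Γ t) = Λ t := by
    intro t ht
    rw [hΛ, hZ]
    have h1 : ft t ≠ 0 := (hftpos t ht).ne'
    have h2 : fΓ (Γ t) ≠ 0 := (hfΓpos _).ne'
    field_simp
  -- continuity of `Γ` and `Λ`
  have hΓcont : ContinuousOn Γ (Icc τ T) := fun t ht =>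
    (hderiv t ht).continuousAt.continuousWithinAt
  have hdfΓcont : Continuous (deriv fΓ) := hfΓC.continuous_deriv one_le_two
  have hΛcont : ContinuousOn Λ (Icc τ T) := by
    have hΛeq : Λ = fun t => 1 + (1 - α * θmin) / (α * θmin) *
        ((s - Γ t) * deriv fΓ (Γ t) / fΓ (Γ t)) := funext hΛ
    rw [hΛeq]
    exact continuousOn_const.add (continuousOn_const.mul
      (((continuousOn_const.sub hΓcont).mul (hdfΓcont.comp_continuousOn hΓcont)).div
        (hfΓC.continuous.comp_continuousOn hΓcont) (fun t _ => (hfΓpos _).ne')))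
  -- key monotonicity lemma on subintervals where `Λ` is positive
  have hmonoLam : ∀ b ∈ Icc τ T, (∀ u ∈ Icc τ b, 0 < Λ u) → MonotoneOn Λ (Icc τ b) := by
    intro b hb hpos
    have hsub : Icc τ b ⊆ Icc τ T := Icc_subset_Icc le_rfl hb.2
    have hΓ'nn : ∀ u ∈ Icc τ b, 0 ≤ Γ' u := by
      intro u hu
      have huT := hsub hu
      rw [hODE u huT, hden u huT]
      apply div_nonneg _ (hpos u hu).le
      have h1 : deriv ft u ≤ 0 := hdt u (le_trans hτ huT.1)
      have h2 : Z u (Γ u) * deriv ft u ≤ 0 :=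
        mul_nonpos_of_nonneg_of_nonpos (hZnn u huT) h1
      have h3 : Z u (Γ u) * deriv ft u * fΓ (Γ u) ≤ 0 :=
        mul_nonpos_of_nonpos_of_nonneg h2 (hfΓpos _).le
      linarith
    have hΓmono : MonotoneOn Γ (Icc τ b) := by
      apply monotoneOn_of_deriv_nonneg (convex_Icc τ b)
        (fun u hu => ((hderiv u (hsub hu)).continuousAt).continuousWithinAt)
      · intro u hu
        rw [interior_Icc] at hu
        exact (hderiv u (hsub (Ioo_subset_Icc_self hu))).differentiableAt.differentiableWithinAt
      · intro u hu
        rw [interior_Icc] at hu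
        rw [(hderiv u (hsub (Ioo_subset_Icc_self hu))).deriv]
        exact hΓ'nn u (Ioo_subset_Icc_self hu)
    intro x hx y hy hxy
    rw [hΛ x, hΛ y]
    have hle := hmono (hrange x (hsub hx)) (hrange y (hsub hy)) (hΓmono hx hy hxy)
    simp only at hle
    have hs1 : (0:ℝ) < 1 - α * θmin := by linarith
    have hc0 : (0:ℝ) ≤ (1 - α * θmin) / (α * θmin) := by positivity
    nlinarith
  -- value at `τ`
  have hΛτ : Λ τ = 1 + (1 - α * θmin) / (α * θmin) * (s * deriv fΓ 0) := by
    rw [hΛ, hΓτ, hfΓ0]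
    ring
  -- positivity at `τ`
  have hΛτpos : 0 < Λ τ := by
    set d := deriv fΓ 0 with hd
    have hd0 : d ≤ 0 := hdΓ 0
    have hsd : s * d ≤ 0 := mul_nonpos_of_nonneg_of_nonpos hs.le hd0
    have hpos : 0 < (1 - s * d) * θmin := mul_pos (by linarith) hθmin
    have key : -(s * d) < α * ((1 - s * d) * θmin) := (div_lt_iff₀ hpos).mp hαmem.1
    have h1 : 0 < α * θmin + (1 - α * θmin) * (s * d) := by nlinarith
    have h2 : Λ τ = (α * θmin + (1 - α * θmin) * (s * d)) / (α * θmin) := by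
      rw [hΛτ]; field_simp
    rw [h2]
    exact div_pos h1 hαθ0
  -- the bootstrap set
  set A : Set ℝ := {t | t ∈ Icc τ T ∧ ∀ u ∈ Icc τ t, Λ τ ≤ Λ u} with hA
  have hτA : τ ∈ A := ⟨⟨le_rfl, hτT⟩, fun u hu => by
    rw [(le_antisymm hu.2 hu.1 : u = τ)]⟩
  have hAbdd : BddAbove A := ⟨T, fun t ht => ht.1.2⟩
  have hAne : A.Nonempty := ⟨τ, hτA⟩
  set m := sSup A with hm
  have hτm : τ ≤ m := le_csSup hAbdd hτA
  have hmT : m ≤ T := csSup_le hAne (fun t ht => ht.1.2)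
  have hmIcc : m ∈ Icc τ T := ⟨hτm, hmT⟩
  have hlt : ∀ u ∈ Ico τ m, Λ τ ≤ Λ u := by
    intro u hu
    obtain ⟨t, htA, hut⟩ := exists_lt_of_lt_csSup hAne hu.2
    exact htA.2 u ⟨hu.1, hut.le⟩
  have hΛm : Λ τ ≤ Λ m := by
    rcases eq_or_lt_of_le hτm with h | h
    · rw [← h]
    · have hne : (𝓝[Ico τ m] m).NeBot := by
        apply mem_closure_iff_nhdsWithin_neBot.mp
        rw [closure_Ico h.ne]
        exact ⟨hτm, le_rfl⟩
      have hcont : ContinuousWithinAt Λ (Ico τ m) m :=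
        (hΛcont m hmIcc).mono (fun u hu => ⟨hu.1, hu.2.le.trans hmT⟩)
      exact ge_of_tendsto hcont (eventually_nhdsWithin_of_forall hlt)
  have hmA : m ∈ A := by
    refine ⟨hmIcc, fun u hu => ?_⟩
    rcases eq_or_lt_of_le hu.2 with h | h
    · rw [h]; exact hΛm
    · exact hlt u ⟨hu.1, h⟩
  have hmT' : m = T := by
    by_contra hne
    have hmltT : m < T := lt_of_le_of_ne hmT hne
    have hΛmpos : 0 < Λ m := lt_of_lt_of_le hΛτpos hΛm
    have hev : ∀ᶠ u in 𝓝[Icc τ T] m, 0 < Λ u :=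
      (hΛcont m hmIcc).eventually (eventually_gt_nhds hΛmpos)
    rw [eventually_iff, Metric.mem_nhdsWithin_iff] at hev
    obtain ⟨ε, hε, hball⟩ := hev
    set t' := min (m + ε / 2) T with ht'
    have hmt' : m < t' := lt_min (by linarith) hmltT
    have ht'T : t' ∈ Icc τ T := ⟨le_trans hτm hmt'.le, min_le_right _ _⟩
    have hpos' : ∀ u ∈ Icc τ t', 0 < Λ u := by
      intro u hu
      rcases le_or_gt u m with h | h
      · exact lt_of_lt_of_le hΛτpos (hmA.2 u ⟨hu.1, h⟩)
      · apply hball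
        constructor
        · rw [Metric.mem_ball, Real.dist_eq, abs_lt]
          have : u ≤ m + ε / 2 := le_trans hu.2 (min_le_left _ _)
          constructor <;> linarith
        · exact ⟨hu.1, hu.2.trans ht'T.2⟩
    have hmonot' := hmonoLam t' ht'T hpos'
    have hτt' : τ ∈ Icc τ t' := ⟨le_rfl, le_trans hτm hmt'.le⟩
    have ht'A : t' ∈ A := ⟨ht'T, fun u hu => hmonot' hτt' hu hu.1⟩
    have : t' ≤ m := le_csSup hAbdd ht'A
    linarith
  have hposAll : ∀ u ∈ Icc τ T, 0 < Λ u := by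
    intro u hu
    exact lt_of_lt_of_le hΛτpos (hmA.2 u (by rwa [hmT']))
  refine ⟨hmonoLam T ⟨hτT, le_rfl⟩ hposAll, hΛτ, hΛτpos,
    fun t ht => (hmonoLam T ⟨hτT, le_rfl⟩ hposAll) ⟨le_rfl, hτT⟩ ht ht.1⟩
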